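/- arXiv:2104.00655 — 5 statements merged into one kernel-verified Lean document; each statement's English description precedes it below -/
import Mathlib

section
/- Let ρ ∈ (-1,1), σ₂ > 0, σ₀ᵧ² = (1+σ₂²)/(1-ρ²). Define aVar_LP(h) = σ₀ᵧ²(1-ρ^{2(h+1)}) - ρ^{2h} and, for h ≥ 1, aVar_VAR(h) = ρ^{2(h-1)}(1-ρ²)σ₀ᵧ²(1 + (h-1)²/(σ₀ᵧ²-1)) + ρ^{2h}σ₂². Then aVar_LP(1) = aVar_VAR(1). -/
theorem stmt_2 (ρ σ₂ : ℝ) (hρ : ρ ∈ Set.Ioo (-1 : ℝ) 1) (hσ : 0 < σ₂)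
    (σ0 : ℝ) (hσ0 : σ0 = (1 + σ₂ ^ 2) / (1 - ρ ^ 2))
    (aVarLP aVarVAR : ℕ → ℝ)
    (hLP : ∀ h : ℕ, aVarLP h = σ0 * (1 - ρ ^ (2 * (h + 1))) - ρ ^ (2 * h))
    (hVAR : ∀ h : ℕ, 1 ≤ h →
      aVarVAR h = ρ ^ (2 * (h - 1)) * (1 - ρ ^ 2) * σ0 * (1 + ((h : ℝ) - 1) ^ 2 / (σ0 - 1))
        + ρ ^ (2 * h) * σ₂ ^ 2) :
    aVarLP 1 = aVarVAR 1 := by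
  have h1 : ρ ^ 2 < 1 := by
    have := abs_lt.mpr ⟨hρ.1, hρ.2⟩
    calc ρ ^ 2 = |ρ| ^ 2 := (sq_abs ρ).symm
    _ < 1 := by nlinarith [abs_nonneg ρ]
  have hne : 1 - ρ ^ 2 ≠ 0 := by nlinarith
  rw [hLP 1, hVAR 1 le_rfl, hσ0]
  norm_num
  field_simp
  ring
end

section
/- Let ρ ∈ (-1,1) with ρ ≠ 0, σ₂ > 0, σ₀ᵧ² = (1+σ₂²)/(1-ρ²), aBias_VAR(h) = ρ^{h-1}(h-1)·ασ₂²/(σ₀ᵧ²-1), and aVar_VAR(h) = ρ^{2(h-1)}(1-ρ²)σ₀ᵧ²(1 + (h-1)²/(σ₀ᵧ²-1)) + ρ^{2h}σ₂². Then aBias_VAR(h)² + aVar_VAR(h) → 0 as h → ∞, while aVar_LP(h) = σ₀ᵧ²(1-ρ^{2(h+1)}) - ρ^{2h} → σ₀ᵧ² > 0. -/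
open Filter Topology

theorem stmt_3 (ρ σ₂ α : ℝ) (hρ : ρ ∈ Set.Ioo (-1 : ℝ) 1) (hρ0 : ρ ≠ 0) (hσ : 0 < σ₂)
    (σ0 : ℝ) (hσ0 : σ0 = (1 + σ₂ ^ 2) / (1 - ρ ^ 2))
    (aBiasVAR aVarVAR aVarLP : ℕ → ℝ)
    (hBias : ∀ h : ℕ, 1 ≤ h →
      aBiasVAR h = ρ ^ (h - 1) * ((h : ℝ) - 1) * (α * σ₂ ^ 2 / (σ0 - 1)))
    (hVar : ∀ h : ℕ, 1 ≤ h →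
      aVarVAR h = ρ ^ (2 * (h - 1)) * (1 - ρ ^ 2) * σ0 * (1 + ((h : ℝ) - 1) ^ 2 / (σ0 - 1))
        + ρ ^ (2 * h) * σ₂ ^ 2)
    (hLP : ∀ h : ℕ, aVarLP h = σ0 * (1 - ρ ^ (2 * (h + 1))) - ρ ^ (2 * h)) :
    Tendsto (fun h : ℕ => (aBiasVAR h) ^ 2 + aVarVAR h) atTop (𝓝 0) ∧
      Tendsto aVarLP atTop (𝓝 σ0) ∧ 0 < σ0 := by
  obtain ⟨hρ1, hρ2⟩ := hρ
  have habs : |ρ| < 1 := abs_lt.mpr ⟨hρ1, hρ2⟩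
  have hr2 : ρ ^ 2 < 1 := by
    have := sq_abs ρ ▸ pow_lt_one₀ (abs_nonneg ρ) habs (two_ne_zero)
    linarith [this]
  have hr2' : (0:ℝ) < 1 - ρ ^ 2 := by linarith
  have hσ0pos : 0 < σ0 := by
    rw [hσ0]; positivity
  -- basic limits
  have h1 : Tendsto (fun n : ℕ => (n : ℝ) * ρ ^ n) atTop (𝓝 0) := by
    have := (summable_pow_mul_geometric_of_norm_lt_one (R := ℝ) 1
      (by rwa [Real.norm_eq_abs])).tendsto_atTop_zero
    simpa using this
  have habs2 : |ρ ^ 2| < 1 := by rw [abs_of_nonneg (sq_nonneg ρ)]; exact hr2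
  have h2 : Tendsto (fun n : ℕ => (ρ ^ 2) ^ n) atTop (𝓝 0) :=
    tendsto_pow_atTop_nhds_zero_of_abs_lt_one habs2
  have h3 : Tendsto (fun n : ℕ => (n : ℝ) ^ 2 * (ρ ^ 2) ^ n) atTop (𝓝 0) :=
    (summable_pow_mul_geometric_of_norm_lt_one (R := ℝ) 2
      (by rwa [Real.norm_eq_abs])).tendsto_atTop_zero
  set c : ℝ := α * σ₂ ^ 2 / (σ0 - 1) with hc
  -- the model sequence
  set F : ℕ → ℝ := fun n =>
    ((n : ℝ) * ρ ^ n) ^ 2 * c ^ 2 +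
      ((ρ ^ 2) ^ n * ((1 - ρ ^ 2) * σ0) +
        ((n : ℝ) ^ 2 * (ρ ^ 2) ^ n) * ((1 - ρ ^ 2) * σ0 / (σ0 - 1)) +
        (ρ ^ 2) ^ n * (ρ ^ 2 * σ₂ ^ 2)) with hF
  have hFt : Tendsto F atTop (𝓝 0) := by
    have := (((h1.pow 2).mul_const (c ^ 2)).add
      (((h2.mul_const ((1 - ρ ^ 2) * σ0)).add
        (h3.mul_const ((1 - ρ ^ 2) * σ0 / (σ0 - 1)))).add
        (h2.mul_const (ρ ^ 2 * σ₂ ^ 2))))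
    simpa using this
  have hsub : Tendsto (fun h : ℕ => h - 1) atTop atTop := tendsto_sub_atTop_nat 1
  have hcomp : Tendsto (fun h : ℕ => F (h - 1)) atTop (𝓝 0) := hFt.comp hsub
  refine ⟨?_, ?_, hσ0pos⟩
  · refine hcomp.congr' ?_
    filter_upwards [eventually_ge_atTop 1] with h hh
    obtain ⟨n, rfl⟩ : ∃ n, h = n + 1 := ⟨h - 1, (Nat.succ_pred_eq_of_pos hh).symm⟩
    rw [hBias _ hh, hVar _ hh]
    have e1 : (n + 1) - 1 = n := rfl
    have e2 : ((n + 1 : ℕ) : ℝ) - 1 = (n : ℝ) := by push_cast; ring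
    rw [e1, e2]
    simp only [hF]
    rw [pow_mul, pow_mul]
    ring
  · have : Tendsto (fun h : ℕ => σ0 * (1 - ρ ^ 2 * (ρ ^ 2) ^ h) - (ρ ^ 2) ^ h) atTop
        (𝓝 (σ0 * (1 - ρ ^ 2 * 0) - 0)) :=
      ((tendsto_const_nhds.sub ((tendsto_const_nhds.mul h2))).const_mul σ0).sub h2
    simp only [mul_zero, sub_zero, mul_one] at this
    refine this.congr ?_
    intro h
    rw [hLP h, pow_mul, pow_mul]
    ring
end

section
/- Let ρ ∈ (-1,1), ρ ≠ 0, α ≠ 0, σ₂ > 0, σ₀ᵧ² = (1+σ₂²)/(1-ρ²). For every integer h ≥ 2, the VAR asymptotic bias aBias_VAR(h) = ρ^{h-1}(h-1)·ασ₂²/(σ₀ᵧ²-1) is nonzero, while the LP asymptotic bias is 0. -/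
theorem stmt_4 (ρ σ₂ α : ℝ) (hρ : ρ ∈ Set.Ioo (-1 : ℝ) 1) (hρ0 : ρ ≠ 0) (hα : α ≠ 0)
    (hσ : 0 < σ₂) (σ0 : ℝ) (hσ0 : σ0 = (1 + σ₂ ^ 2) / (1 - ρ ^ 2))
    (aBiasVAR aBiasLP : ℕ → ℝ)
    (hBias : ∀ h : ℕ, 1 ≤ h →
      aBiasVAR h = ρ ^ (h - 1) * ((h : ℝ) - 1) * (α * σ₂ ^ 2 / (σ0 - 1)))
    (hBiasLP : ∀ h : ℕ, aBiasLP h = 0) :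
    ∀ h : ℕ, 2 ≤ h → aBiasVAR h ≠ 0 ∧ aBiasLP h = 0 := by
  intro h hh
  obtain ⟨h1, h2⟩ := hρ
  have hd : 0 < 1 - ρ ^ 2 := by nlinarith
  have hσ1 : 1 < σ0 := by
    rw [hσ0, lt_div_iff₀ hd]
    nlinarith [sq_nonneg ρ, sq_nonneg σ₂, sq_abs ρ, abs_pos.mpr hρ0]
  refine ⟨?_, hBiasLP h⟩
  rw [hBias h (le_trans one_le_two hh)]
  have hne1 : ρ ^ (h - 1) ≠ 0 := pow_ne_zero _ hρ0
  have hne2 : (h : ℝ) - 1 ≠ 0 := by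
    have : (2 : ℝ) ≤ (h : ℝ) := by exact_mod_cast hh
    linarith
  have hne3 : α * σ₂ ^ 2 / (σ0 - 1) ≠ 0 := by
    apply div_ne_zero
    · exact mul_ne_zero hα (by positivity)
    · linarith
  exact mul_ne_zero (mul_ne_zero hne1 hne2) hne3
end

section
/- Let ρ ∈ (-1,1), σ₂ > 0, σ₀ᵧ² = (1+σ₂²)/(1-ρ²). For every h ≥ 2 with ρ ≠ 0, aVar_VAR(h) = ρ^{2(h-1)}(1-ρ²)σ₀ᵧ²(1 + (h-1)²/(σ₀ᵧ²-1)) + ρ^{2h}σ₂² < aVar_LP(h) = σ₀ᵧ²(1-ρ^{2(h+1)}) - ρ^{2h}. -/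
lemma nn_aux (n : ℕ) : 0 ≤ (n:ℝ) * ((n:ℝ) - 1) := by
  have h : (n:ℕ) ≤ n ^ 2 := Nat.le_self_pow two_ne_zero n
  have h' : (n:ℝ) ≤ (n:ℝ) ^ 2 := by exact_mod_cast h
  nlinarith

/-- Second-order Bernoulli inequality. -/
lemma lemA (t : ℝ) (ht : 0 ≤ t) : ∀ n : ℕ,
    1 + n * t + n * ((n : ℝ) - 1) / 2 * t ^ 2 ≤ (1 + t) ^ n := by
  intro n
  induction n with
  | zero => norm_num
  | succ n ih =>
    have hnn := nn_aux n
    have hcube : 0 ≤ (n:ℝ) * ((n:ℝ) - 1) / 2 * t ^ 3 := by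
      apply mul_nonneg (by linarith) (by positivity)
    have h2 : (1 + (n:ℝ) * t + n * ((n : ℝ) - 1) / 2 * t ^ 2) * (1 + t)
        ≤ (1 + t) ^ n * (1 + t) := by
      apply mul_le_mul_of_nonneg_right ih (by linarith)
    have h3 : (1 + (n:ℝ) * t + n * ((n : ℝ) - 1) / 2 * t ^ 2) * (1 + t)
        = 1 + ((n:ℝ)+1) * t + ((n:ℝ)+1) * (((n:ℝ)+1) - 1) / 2 * t ^ 2
          + (n:ℝ) * ((n:ℝ) - 1) / 2 * t ^ 3 := by ring
    have h4 : (1 + t) ^ (n+1) = (1 + t) ^ n * (1 + t) := pow_succ _ _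
    push_cast
    linarith [h2, h3.le, h3.ge, h4.le, h4.ge]

/-- Key bound: (2n+1)(1-r)rⁿ < 1 for 0 < r < 1. -/
lemma lemB (r : ℝ) (hr0 : 0 < r) (hr1 : r < 1) (n : ℕ) :
    (2 * (n:ℝ) + 1) * (1 - r) * r ^ n < 1 := by
  set t : ℝ := (1 - r) / r with htdef
  have ht : 0 < t := div_pos (by linarith) hr0
  have h1t : (0:ℝ) < 1 + t := by linarith
  have hrt : r * (1 + t) = 1 := by rw [htdef]; field_simp; ring
  have hnn := nn_aux n
  have hA := lemA t ht.le n
  have hpow : (1 + t) ^ n * r ^ n = 1 := by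
    rw [← mul_pow, mul_comm (1+t) r, hrt, one_pow]
  have hn0 : (0:ℝ) ≤ (n:ℝ) := Nat.cast_nonneg n
  have hDr : (1 + n * t + n * ((n:ℝ) - 1) / 2 * t ^ 2) * r ^ n ≤ 1 := by
    calc (1 + n * t + n * ((n:ℝ) - 1) / 2 * t ^ 2) * r ^ n
        ≤ (1 + t) ^ n * r ^ n :=
          mul_le_mul_of_nonneg_right hA (pow_nonneg hr0.le n)
      _ = 1 := hpow
  have key : (2 * (n:ℝ) + 1) * t < (1 + t) * (1 + n * t + n * ((n:ℝ) - 1) / 2 * t ^ 2) := by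
    nlinarith [sq_nonneg ((n:ℝ) * t - 1), mul_nonneg (mul_nonneg hnn ht.le) (sq_nonneg t),
      sq_nonneg t, mul_nonneg hnn ht.le]
  have hstrict : (2 * (n:ℝ) + 1) * (1 - r) < 1 + n * t + n * ((n:ℝ) - 1) / 2 * t ^ 2 := by
    have h1r : 1 - r = t * r := by rw [htdef]; field_simp
    rw [h1r]
    have hrr : r = 1 / (1 + t) := by
      rw [eq_div_iff (ne_of_gt h1t)]; linarith [hrt]
    rw [hrr]
    rw [show (2 * (n:ℝ) + 1) * (t * (1 / (1 + t))) = ((2 * (n:ℝ) + 1) * t) / (1 + t) by ring]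
    rw [div_lt_iff₀ h1t]
    nlinarith [key]
  calc (2 * (n:ℝ) + 1) * (1 - r) * r ^ n
      < (1 + n * t + n * ((n:ℝ) - 1) / 2 * t ^ 2) * r ^ n :=
        mul_lt_mul_of_pos_right hstrict (pow_pos hr0 n)
    _ ≤ 1 := hDr

/-- Key geometric-sum inequality. -/
lemma lemC (r : ℝ) (hr0 : 0 < r) (hr1 : r < 1) : ∀ n : ℕ, 1 ≤ n →
    (n:ℝ) ^ 2 * (1 - r) ^ 2 * r ^ n < r * (1 - r ^ n) := by
  intro n
  induction n with
  | zero => omega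
  | succ n ih =>
    intro _
    rcases Nat.eq_zero_or_pos n with h | h
    · subst h
      simp only [Nat.cast_one, pow_one, Nat.cast_ofNat, Nat.zero_add]
      push_cast
      nlinarith [mul_pos (mul_pos hr0 hr0) (sub_pos.mpr hr1)]
    · have IH := ih h
      have hB := lemB r hr0 hr1 n
      have hpn : 0 < r ^ n := pow_pos hr0 n
      have hstep : (2 * (n:ℝ) + 1) * (1 - r) * (r ^ n * r) < r := by
        nlinarith [mul_lt_mul_of_pos_right hB hr0]
      have h3 : (2 * (n:ℝ) + 1) * (1 - r) ^ 2 * (r ^ n * r) < r * (1 - r) := by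
        nlinarith [mul_lt_mul_of_pos_right hstep (sub_pos.mpr hr1)]
      have IHr := mul_lt_mul_of_pos_left IH hr0
      push_cast
      rw [pow_succ r n]
      nlinarith [IHr, h3]

theorem stmt_5 (ρ σ₂ : ℝ) (hρ : ρ ∈ Set.Ioo (-1 : ℝ) 1) (hρ0 : ρ ≠ 0) (hσ : 0 < σ₂)
    (σ0 : ℝ) (hσ0 : σ0 = (1 + σ₂ ^ 2) / (1 - ρ ^ 2)) :
    ∀ h : ℕ, 2 ≤ h →
      ρ ^ (2 * (h - 1)) * (1 - ρ ^ 2) * σ0 * (1 + ((h : ℝ) - 1) ^ 2 / (σ0 - 1))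
          + ρ ^ (2 * h) * σ₂ ^ 2
        < σ0 * (1 - ρ ^ (2 * (h + 1))) - ρ ^ (2 * h) := by
  intro h hh
  obtain ⟨k, rfl⟩ : ∃ k, h = k + 2 := ⟨h - 2, by omega⟩
  obtain ⟨hρl, hρr⟩ := hρ
  set r : ℝ := ρ ^ 2 with hrdef
  have hr0 : 0 < r := by positivity
  have hr1 : r < 1 := by nlinarith
  set s : ℝ := σ₂ ^ 2 with hsdef
  have hs : 0 < s := by positivity
  set n : ℕ := k + 1 with hndef
  have h1r : (0:ℝ) < 1 - r := by linarith
  have hrs : (0:ℝ) < r + s := by linarith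
  have hkey := lemC r hr0 hr1 n (by omega)
  have hP1 : r ^ n < 1 := pow_lt_one₀ hr0.le hr1 (by omega)
  have hP0 : 0 < r ^ n := pow_pos hr0 n
  have hmain : 0 < (r + s) * (1 - r ^ n) - (n:ℝ) ^ 2 * (1 - r) ^ 2 * r ^ n := by
    nlinarith [mul_pos hs (sub_pos.mpr hP1)]
  have e1 : ρ ^ (2 * (k + 2 - 1)) = r ^ n := by
    rw [hrdef, ← pow_mul]; congr 1 <;> omega
  have e2 : ρ ^ (2 * (k + 2)) = r ^ n * r := by
    rw [hrdef, ← pow_mul, ← pow_add]; congr 1 <;> omega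
  have e3 : ρ ^ (2 * (k + 2 + 1)) = r ^ n * r ^ 2 := by
    rw [hrdef, ← pow_mul, ← pow_mul, ← pow_add]; congr 1 <;> omega
  have ecast : ((k:ℝ) + 2) - 1 = (n:ℝ) := by rw [hndef]; push_cast; ring
  have hσ1 : σ0 - 1 = (r + s) / (1 - r) := by
    rw [hσ0]; field_simp; ring
  rw [e1, e2, e3]
  push_cast
  rw [ecast, hσ1, hσ0, ← sub_pos]
  calc (0:ℝ)
      < (1 + s) * ((r + s) * (1 - r ^ n) - (n:ℝ) ^ 2 * (1 - r) ^ 2 * r ^ n)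
          / ((1 - r) * (r + s)) :=
        div_pos (mul_pos (by linarith) hmain) (mul_pos h1r hrs)
    _ = _ := by
        field_simp
        ring
end

section
/- Let ρ ∈ (0,1), σ₂ > 0, and σ₀ᵧ² = (1+σ₂²)/(1-ρ²). Then aVar_VAR(2) < aVar_LP(2), where aVar_VAR(2) = ρ²(1-ρ²)σ₀ᵧ²(1 + 1/(σ₀ᵧ²-1)) + ρ⁴σ₂² and aVar_LP(2) = σ₀ᵧ²(1-ρ⁶) - ρ⁴. -/
theorem stmt_18 (ρ σ₂ : ℝ) (hρ : ρ ∈ Set.Ioo (0 : ℝ) 1) (hσ : 0 < σ₂)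
    (σ0 : ℝ) (hσ0 : σ0 = (1 + σ₂ ^ 2) / (1 - ρ ^ 2)) :
    ρ ^ 2 * (1 - ρ ^ 2) * σ0 * (1 + 1 / (σ0 - 1)) + ρ ^ 4 * σ₂ ^ 2
      < σ0 * (1 - ρ ^ 6) - ρ ^ 4 := by
  obtain ⟨h0, h1⟩ := hρ
  have hd : (0:ℝ) < 1 - ρ ^ 2 := by nlinarith
  have hs1 : σ0 - 1 = (σ₂ ^ 2 + ρ ^ 2) / (1 - ρ ^ 2) := by
    rw [hσ0]; field_simp; ring
  have hpos : (0:ℝ) < σ0 - 1 := by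
    rw [hs1]; positivity
  have hne : σ0 - 1 ≠ 0 := ne_of_gt hpos
  have hq : (0:ℝ) < σ₂ ^ 2 + ρ ^ 2 := by positivity
  subst hσ0
  rw [hs1, one_div_div]
  field_simp
  have hkey : ((1 + σ₂ ^ 2) * (1 - ρ ^ 6) - (1 - ρ ^ 2) * ρ ^ 4) * ((1 - ρ ^ 2) * (σ₂ ^ 2 + ρ ^ 2))
      - (ρ ^ 2 * (1 - ρ ^ 2) * (1 + σ₂ ^ 2) * (σ₂ ^ 2 + 1)
        + ρ ^ 4 * σ₂ ^ 2 * ((1 - ρ ^ 2) * (σ₂ ^ 2 + ρ ^ 2))) * (1 - ρ ^ 2)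
      = (1 - ρ ^ 2) ^ 2 * (σ₂ ^ 2 + 1) * (σ₂ ^ 2 + ρ ^ 4) := by ring
  nlinarith [hkey, mul_pos (mul_pos (pow_pos hd 2) (by positivity : (0:ℝ) < σ₂ ^ 2 + 1)) (by positivity : (0:ℝ) < σ₂ ^ 2 + ρ ^ 4)]
end
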